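/- Let n ≥ 3 be odd and suppose (x̂_k), (ŷ_k) are n-periodic real sequences with x̂_k < 0, ŷ_k < 0, and x̂_k ŷ_k < 1 for all k. Let L_k be the 3×3 matrix with rows (1,0,1), (1 - x̂_kŷ_k, 0, 1), (0, -ŷ_k, 0), and let M = L₁·…·L_n. Then M has three distinct real eigenvalues. -/

import Mathlib

open Polynomial

open Matrix
noncomputable section


lemma mulVec_pos3 {A : Matrix (Fin 3) (Fin 3) ℝ} (hA : ∀ i j, 0 < A i j)
    {u : Fin 3 → ℝ} (hu : ∀ i, 0 ≤ u i) (hne : ∃ j, 0 < u j) :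
    ∀ i, 0 < A.mulVec u i := by
  intro i
  obtain ⟨j, hj⟩ := hne
  rw [Matrix.mulVec, dotProduct]
  refine Finset.sum_pos' (fun k _ => mul_nonneg (hA i k).le (hu k)) ⟨j, Finset.mem_univ j, ?_⟩
  exact mul_pos (hA i j) hj

lemma mulVec_mono3 {A : Matrix (Fin 3) (Fin 3) ℝ} (hA : ∀ i j, 0 < A i j)
    {a b : Fin 3 → ℝ} (h : ∀ i, a i ≤ b i) :
    ∀ i, A.mulVec a i ≤ A.mulVec b i := by
  intro i
  rw [Matrix.mulVec, Matrix.mulVec, dotProduct, dotProduct]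
  exact Finset.sum_le_sum fun k _ => mul_le_mul_of_nonneg_left (h k) (hA i k).le

lemma perron3 {A : Matrix (Fin 3) (Fin 3) ℝ} (hA : ∀ i j, 0 < A i j) :
    ∃ r : ℝ, 0 < r ∧ (∃ v : Fin 3 → ℝ, (∀ i, 0 < v i) ∧ A.mulVec v = r • v) ∧
      ∀ (μ : ℝ) (w : Fin 3 → ℝ), w ≠ 0 → A.mulVec w = μ • w → |μ| ≤ r := by
  classical
  set S : Set (Fin 3 → ℝ) := stdSimplex ℝ (Fin 3) with hS
  have hScomp : IsCompact S := isCompact_stdSimplex ℝ (Fin 3)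
  have hcont : Continuous (fun u : Fin 3 → ℝ => A.mulVec u) :=
    LinearMap.continuous_of_finiteDimensional A.mulVecLin
  set T : Set (Fin 3 → ℝ) := (fun u => A.mulVec u) '' S with hT
  have hTcomp : IsCompact T := hScomp.image hcont
  have hTpos : ∀ u ∈ T, ∀ i, 0 < u i := by
    rintro _ ⟨z, hzS, rfl⟩ i
    obtain ⟨hz0, hz1⟩ := hzS
    have hzj : ∃ j, 0 < z j := by
      by_contra hc
      push_neg at hc
      have : ∀ j, z j = 0 := fun j => le_antisymm (hc j) (hz0 j)
      simp [this] at hz1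
    exact mulVec_pos3 hA hz0 hzj i
  have hTApos : ∀ u ∈ T, ∀ i, 0 < A.mulVec u i := by
    intro u hu i
    exact mulVec_pos3 hA (fun j => (hTpos u hu j).le) ⟨0, hTpos u hu 0⟩ i
  set g : (Fin 3 → ℝ) → ℝ := fun u =>
    min (min (A.mulVec u 0 / u 0) (A.mulVec u 1 / u 1)) (A.mulVec u 2 / u 2) with hg
  have hgcont : ContinuousOn g T := by
    have hc1 : ∀ i : Fin 3, ContinuousOn (fun u : Fin 3 → ℝ => A.mulVec u i / u i) T := by
      intro i
      refine ContinuousOn.div ?_ ?_ ?_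
      · exact ((continuous_apply i).comp hcont).continuousOn
      · exact (continuous_apply i).continuousOn
      · intro u hu; exact (hTpos u hu i).ne'
    exact fun x hx => (((hc1 0 x hx).min (hc1 1 x hx)).min (hc1 2 x hx))
  have hTne : T.Nonempty := by
    refine ⟨A.mulVec (fun _ => (3 : ℝ)⁻¹), ⟨fun _ => (3 : ℝ)⁻¹, ⟨fun i => by norm_num, ?_⟩, rfl⟩⟩
    simp [Finset.sum_const]
  obtain ⟨w, hwT, hwmax⟩ := hTcomp.exists_isMaxOn hTne hgcont
  set r := g w with hr
  -- the key Collatz–Wielandt style bound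
  have hkey : ∀ (t : ℝ) (u : Fin 3 → ℝ), (∀ i, 0 ≤ u i) → (∃ j, 0 < u j) →
      (∀ i, t * u i ≤ A.mulVec u i) → t ≤ r := by
    intro t u hu hj hle
    set y := A.mulVec u with hy
    have hypos : ∀ i, 0 < y i := mulVec_pos3 hA hu hj
    have step : ∀ z : Fin 3 → ℝ, (∀ i, t * z i ≤ A.mulVec z i) →
        (∀ i, t * A.mulVec z i ≤ A.mulVec (A.mulVec z) i) := by
      intro z hz i
      have h2 : ∀ i, A.mulVec (t • z) i ≤ A.mulVec (A.mulVec z) i :=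
        mulVec_mono3 hA (fun i => by simpa using hz i)
      have h3 := h2 i
      rw [Matrix.mulVec_smul] at h3
      simpa using h3
    have h1 : ∀ i, t * y i ≤ A.mulVec y i := step u hle
    set σ := ∑ i, y i with hσ
    have hσpos : 0 < σ := Finset.sum_pos (fun i _ => hypos i) ⟨0, Finset.mem_univ 0⟩
    set y' : Fin 3 → ℝ := σ⁻¹ • y with hy'
    have hy'S : y' ∈ S := by
      constructor
      · intro i; exact mul_nonneg (inv_nonneg.mpr hσpos.le) (hypos i).le
      · simp only [hy', Pi.smul_apply, smul_eq_mul, ← Finset.mul_sum]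
        field_simp
        exact hσ.symm
    have hw'T : A.mulVec y' ∈ T := ⟨y', hy'S, rfl⟩
    set w' := A.mulVec y' with hw'
    have hw'pos : ∀ i, 0 < w' i := hTpos w' hw'T
    have hineq : ∀ i, t * w' i ≤ A.mulVec w' i := by
      intro i
      have h4 := step y h1 i
      have : w' = σ⁻¹ • A.mulVec y := by rw [hw', hy', Matrix.mulVec_smul]
      rw [this, Matrix.mulVec_smul]
      simp only [Pi.smul_apply, smul_eq_mul]
      calc t * (σ⁻¹ * A.mulVec y i) = σ⁻¹ * (t * A.mulVec y i) := by ring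
        _ ≤ σ⁻¹ * A.mulVec (A.mulVec y) i :=
          mul_le_mul_of_nonneg_left h4 (inv_nonneg.mpr hσpos.le)
    have ht : t ≤ g w' := by
      have hti : ∀ i, t ≤ A.mulVec w' i / w' i := fun i =>
        (le_div_iff₀ (hw'pos i)).mpr (by linarith [hineq i, mul_comm t (w' i)])
      exact le_min (le_min (hti 0) (hti 1)) (hti 2)
    exact ht.trans (hwmax hw'T)
  have hwpos : ∀ i, 0 < w i := hTpos w hwT
  have hAwpos : ∀ i, 0 < A.mulVec w i := hTApos w hwT
  have hrw : ∀ i, r * w i ≤ A.mulVec w i := by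
    intro i
    have : r ≤ A.mulVec w i / w i := by
      fin_cases i
      · exact (min_le_left _ _).trans (min_le_left _ _)
      · exact (min_le_left _ _).trans (min_le_right _ _)
      · exact min_le_right _ _
    calc r * w i ≤ (A.mulVec w i / w i) * w i :=
          mul_le_mul_of_nonneg_right this (hwpos i).le
      _ = A.mulVec w i := by rw [div_mul_eq_mul_div, mul_div_cancel_right₀ _ (hwpos i).ne']
  have hrpos : 0 < r := by
    have : ∀ i, 0 < A.mulVec w i / w i := fun i => div_pos (hAwpos i) (hwpos i)
    exact lt_min (lt_min (this 0) (this 1)) (this 2)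
  have heig : A.mulVec w = r • w := by
    by_contra hne'
    have hex : ∃ i, A.mulVec w i ≠ r * w i := by
      by_contra hc
      push_neg at hc
      exact hne' (funext fun i => by rw [hc i]; rfl)
    obtain ⟨i₀, hi₀⟩ := hex
    set u : Fin 3 → ℝ := fun i => A.mulVec w i - r * w i with hu
    have hupos : ∀ i, 0 ≤ u i := fun i => by simp [hu]; linarith [hrw i]
    have huj : ∃ j, 0 < u j := ⟨i₀, by simp [hu]; cases lt_or_eq_of_le (hrw i₀) with
      | inl h => linarith
      | inr h => exact absurd h.symm hi₀⟩
    have hAu : ∀ i, 0 < A.mulVec u i := mulVec_pos3 hA hupos huj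
    set y := A.mulVec w with hy
    have hry : ∀ i, r * y i < A.mulVec y i := by
      intro i
      have : u = A.mulVec w - r • w := by funext i; simp [hu]; rfl
      have h5 := hAu i
      rw [this, Matrix.mulVec_sub, Matrix.mulVec_smul] at h5
      simp only [Pi.sub_apply, Pi.smul_apply, smul_eq_mul] at h5
      linarith
    set t₀ := min (min (A.mulVec y 0 / y 0) (A.mulVec y 1 / y 1)) (A.mulVec y 2 / y 2) with ht₀
    have hypos : ∀ i, 0 < y i := hAwpos
    have ht₀r : r < t₀ := by
      have : ∀ i, r < A.mulVec y i / y i := fun i => (lt_div_iff₀ (hypos i)).mpr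
        (by linarith [hry i, mul_comm r (y i)])
      exact lt_min (lt_min (this 0) (this 1)) (this 2)
    have ht₀le : ∀ i, t₀ * y i ≤ A.mulVec y i := by
      intro i
      have : t₀ ≤ A.mulVec y i / y i := by
        fin_cases i
        · exact (min_le_left _ _).trans (min_le_left _ _)
        · exact (min_le_left _ _).trans (min_le_right _ _)
        · exact min_le_right _ _
      calc t₀ * y i ≤ (A.mulVec y i / y i) * y i :=
            mul_le_mul_of_nonneg_right this (hypos i).le
        _ = A.mulVec y i := by rw [div_mul_eq_mul_div, mul_div_cancel_right₀ _ (hypos i).ne']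
    have := hkey t₀ y (fun i => (hypos i).le) ⟨0, hypos 0⟩ ht₀le
    linarith
  refine ⟨r, hrpos, ⟨w, hwpos, heig⟩, ?_⟩
  intro μ w' hw0 heigw
  set u : Fin 3 → ℝ := fun i => |w' i| with hu
  have hupos : ∀ i, 0 ≤ u i := fun i => abs_nonneg _
  have huj : ∃ j, 0 < u j := by
    obtain ⟨j, hj⟩ := Function.ne_iff.mp hw0
    exact ⟨j, abs_pos.mpr hj⟩
  refine hkey |μ| u hupos huj ?_
  intro i
  have h6 : |μ| * u i = |A.mulVec w' i| := by
    rw [hu]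
    simp only [← abs_mul]
    rw [heigw]
    simp [abs_mul, mul_comm]
  rw [h6, Matrix.mulVec, dotProduct]
  refine (Finset.abs_sum_le_sum_abs _ _).trans ?_
  rw [Matrix.mulVec, dotProduct]
  apply Finset.sum_le_sum
  intro k _
  rw [abs_mul, abs_of_pos (hA i k)]

lemma charpoly_eval3 (M : Matrix (Fin 3) (Fin 3) ℝ) (r : ℝ) :
    M.charpoly.eval r = (r • (1 : Matrix (Fin 3) (Fin 3) ℝ) - M).det := by
  rw [Matrix.charpoly, _root_.eval_det, Matrix.matPolyEquiv_charmatrix]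
  simp only [eval_sub, eval_X, eval_C, Matrix.scalar_apply]
  congr 2
  ext i j
  by_cases h : i = j <;> simp [h, Matrix.one_apply, Matrix.diagonal]

lemma eigen_unique3 {A : Matrix (Fin 3) (Fin 3) ℝ} (hA : ∀ i j, 0 < A i j)
    {r : ℝ} {v : Fin 3 → ℝ} (hr : 0 < r) (hv : ∀ i, 0 < v i)
    (hAv : A.mulVec v = r • v)
    {w : Fin 3 → ℝ} (hw : A.mulVec w = r • w) : ∃ t : ℝ, w = t • v := by
  classical
  set c := min (min (w 0 / v 0) (w 1 / v 1)) (w 2 / v 2) with hc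
  set u : Fin 3 → ℝ := fun i => w i - c * v i with hu
  have hci : ∀ i, c ≤ w i / v i := by
    intro i
    fin_cases i
    · exact (min_le_left _ _).trans (min_le_left _ _)
    · exact (min_le_left _ _).trans (min_le_right _ _)
    · exact min_le_right _ _
  have hupos : ∀ i, 0 ≤ u i := by
    intro i
    have := (le_div_iff₀ (hv i)).mp (hci i)
    simp only [hu]; linarith
  have hzero : ∃ j, u j = 0 := by
    have h0 : ∀ j : Fin 3, c = w j / v j → u j = 0 := by
      intro j hj
      simp only [hu, hj]
      rw [div_mul_cancel₀ _ (hv j).ne', sub_self]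
    rcases min_cases (min (w 0 / v 0) (w 1 / v 1)) (w 2 / v 2) with ⟨h, _⟩ | ⟨h, _⟩
    · rcases min_cases (w 0 / v 0) (w 1 / v 1) with ⟨h', _⟩ | ⟨h', _⟩
      · exact ⟨0, h0 0 (by rw [hc, h, h'])⟩
      · exact ⟨1, h0 1 (by rw [hc, h, h'])⟩
    · exact ⟨2, h0 2 (by rw [hc, h])⟩
  obtain ⟨j, hj⟩ := hzero
  by_cases hu0 : ∀ i, u i = 0
  · refine ⟨c, funext fun i => ?_⟩
    have := hu0 i
    simp only [hu] at this
    simp only [Pi.smul_apply, smul_eq_mul]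
    linarith
  · exfalso
    push_neg at hu0
    obtain ⟨k, hk⟩ := hu0
    have hukpos : ∃ k, 0 < u k := ⟨k, lt_of_le_of_ne (hupos k) (Ne.symm hk)⟩
    have hAu : ∀ i, 0 < A.mulVec u i := mulVec_pos3 hA hupos hukpos
    have hueq : u = w - c • v := by funext i; simp [hu]
    have hulin : A.mulVec u = r • u := by
      rw [hueq, Matrix.mulVec_sub, Matrix.mulVec_smul, hw, hAv, smul_sub, smul_comm]
    have h7 : A.mulVec u j = 0 := by
      rw [hulin]
      simp [hj]
    exact (hAu j).ne' h7

lemma monic_two_eq (q : ℝ[X]) (hm : q.Monic) (hd : q.natDegree = 2) :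
    q = X ^ 2 + C (q.coeff 1) * X + C (q.coeff 0) := by
  ext k
  match k with
  | 0 => simp
  | 1 => simp
  | 2 =>
    have h2 : q.coeff 2 = 1 := by
      have := hm.leadingCoeff
      rwa [Polynomial.leadingCoeff, hd] at this
    simp [h2, Polynomial.coeff_X]
  | (n+3) =>
    have h1 : q.coeff (n+3) = 0 := Polynomial.coeff_eq_zero_of_natDegree_lt (by omega)
    rw [h1]
    rw [Polynomial.coeff_add, Polynomial.coeff_add, Polynomial.coeff_X_pow,
      Polynomial.coeff_C_mul, Polynomial.coeff_X, Polynomial.coeff_C]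
    have h2 : ¬ (2 = n + 3) := by omega
    have h3 : ¬ (n + 3 = 1) := by omega
    have h4 : ¬ (n + 3 = 0) := by omega
    simp [h2, h3, h4]

lemma quad_factor (q : ℝ[X]) (hm : q.Monic) (hd : q.natDegree = 2) (hc : q.coeff 0 < 0) :
    ∃ z₂ z₃ : ℝ, z₂ < 0 ∧ 0 < z₃ ∧ q = (X - C z₂) * (X - C z₃) := by
  set b := q.coeff 1 with hb
  set c := q.coeff 0 with hcdef
  set s := Real.sqrt (b ^ 2 - 4 * c) with hs
  have hdisc : b ^ 2 < b ^ 2 - 4 * c := by linarith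
  have habs : |b| < s := by
    rw [hs, ← Real.sqrt_sq_eq_abs]
    exact Real.sqrt_lt_sqrt (sq_nonneg _) hdisc
  have hssq : s ^ 2 = b ^ 2 - 4 * c := Real.sq_sqrt (by nlinarith [abs_nonneg b])
  refine ⟨(-b - s) / 2, (-b + s) / 2, ?_, ?_, ?_⟩
  · have h5 := neg_le_abs b
    linarith
  · have h5 := le_abs_self b
    linarith
  · rw [monic_two_eq q hm hd, ← hb, ← hcdef]
    have e1 : ((-b - s) / 2) * ((-b + s) / 2) = c := by nlinarith [hssq]
    have e2 : ((-b - s) / 2) + ((-b + s) / 2) = -b := by ring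
    rw [show (X - C ((-b - s) / 2)) * (X - C ((-b + s) / 2)) =
        X ^ 2 - C (((-b - s) / 2) + ((-b + s) / 2)) * X + C (((-b - s) / 2) * ((-b + s) / 2)) from by
      rw [C_add, C_mul]; ring]
    rw [e1, e2]
    rw [C_neg]
    ring

lemma cubic_expand (a b c : ℝ) : (X - C a) * ((X - C b) * (X - C c)) =
    X ^ 3 - C (a + b + c) * X ^ 2 + C (a * b + a * c + b * c) * X - C (a * b * c) := by
  simp only [C_add, C_mul]
  ring

lemma cubic_coeff2 (a b c : ℝ) :
    ((X - C a) * ((X - C b) * (X - C c))).coeff 2 = -(a + b + c) := by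
  rw [cubic_expand]
  simp only [coeff_add, coeff_sub, coeff_C_mul, coeff_X_pow, coeff_C, coeff_X]
  norm_num

-- eigenvalue of A from a root of the transposed/any singular shift
lemma root_to_eig (A : Matrix (Fin 3) (Fin 3) ℝ) (t : ℝ)
    (h : (t • (1 : Matrix (Fin 3) (Fin 3) ℝ) - A).det = 0) :
    ∃ w : Fin 3 → ℝ, w ≠ 0 ∧ A.mulVec w = t • w := by
  obtain ⟨w, hw0, hw⟩ := (Matrix.exists_mulVec_eq_zero_iff).mpr h
  refine ⟨w, hw0, ?_⟩
  rw [Matrix.sub_mulVec, Matrix.smul_mulVec, Matrix.one_mulVec] at hw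
  have := sub_eq_zero.mp hw
  rw [← this]

lemma eig_to_root (A : Matrix (Fin 3) (Fin 3) ℝ) (t : ℝ) (w : Fin 3 → ℝ) (hw0 : w ≠ 0)
    (hw : A.mulVec w = t • w) : (t • (1 : Matrix (Fin 3) (Fin 3) ℝ) - A).det = 0 := by
  apply (Matrix.exists_mulVec_eq_zero_iff).mp
  refine ⟨w, hw0, ?_⟩
  rw [Matrix.sub_mulVec, Matrix.smul_mulVec, Matrix.one_mulVec, hw, sub_self]

theorem main3 {A : Matrix (Fin 3) (Fin 3) ℝ} (hA : ∀ i j, 0 < A i j) (hdet : A.det < 0) :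
    ∃ z₁ z₂ z₃ : ℝ, z₁ ≠ z₂ ∧ z₁ ≠ z₃ ∧ z₂ ≠ z₃ ∧
      A.charpoly = (X - C z₁) * ((X - C z₂) * (X - C z₃)) := by
  classical
  obtain ⟨r, hrpos, ⟨v, hvpos, hAv⟩, hdom⟩ := perron3 hA
  have hvne : v ≠ 0 := fun h => (hvpos 0).ne' (by rw [h]; rfl)
  have hroot : A.charpoly.IsRoot r := by
    rw [Polynomial.IsRoot, charpoly_eval3]
    exact eig_to_root A r v hvne hAv
  set p := A.charpoly with hp
  have hmonic : p.Monic := A.charpoly_monic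
  have hdeg : p.natDegree = 3 := by
    rw [hp, Matrix.charpoly_natDegree_eq_dim]
    simp
  set q := p /ₘ (X - C r) with hq
  have hfact : (X - C r) * q = p := (Polynomial.mul_divByMonic_eq_iff_isRoot).mpr hroot
  have hqmonic : q.Monic := (monic_X_sub_C r).of_mul_monic_left (by rw [hfact]; exact hmonic)
  have hqdeg : q.natDegree = 2 := by
    have h1 : p.natDegree = (X - C r).natDegree + q.natDegree := by
      rw [← hfact]
      exact Polynomial.natDegree_mul (X_sub_C_ne_zero r) hqmonic.ne_zero
    rw [natDegree_X_sub_C] at h1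
    omega
  have hc0 : p.coeff 0 = -A.det := by
    have := Matrix.det_eq_sign_charpoly_coeff A
    simp at this
    linarith
  have hq0 : q.coeff 0 < 0 := by
    have h2 : p.coeff 0 = (X - C r).coeff 0 * q.coeff 0 := by rw [← hfact, mul_coeff_zero]
    simp at h2
    rw [hc0] at h2
    nlinarith
  obtain ⟨z₂, z₃, hz₂, hz₃, hqf⟩ := quad_factor q hqmonic hqdeg hq0
  have hpf : p = (X - C r) * ((X - C z₂) * (X - C z₃)) := by rw [← hfact, hqf]
  refine ⟨r, z₂, z₃, by intro h; linarith [h ▸ hrpos], ?_, by intro h; linarith [h ▸ hz₂], hpf⟩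
  -- the hard part: r ≠ z₃ (simplicity of the Perron root)
  intro hrz
  subst hrz
  -- trace identity
  have htr : A.trace = r + z₂ + r := by
    have h3 := Matrix.trace_eq_neg_charpoly_coeff A
    rw [← hp, hpf, show Fintype.card (Fin 3) - 1 = 2 from rfl, cubic_coeff2] at h3
    linarith [h3]
  -- Cayley-Hamilton
  set K : Matrix (Fin 3) (Fin 3) ℝ := A - r • 1 with hK
  set N : Matrix (Fin 3) (Fin 3) ℝ := A - z₂ • 1 with hN
  have hCH : K * (N * K) = 0 := by
    have h4 := Matrix.aeval_self_charpoly A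
    rw [← hp, hpf] at h4
    simpa [_root_.map_mul, map_sub, Polynomial.aeval_X, Polynomial.aeval_C,
      Algebra.algebraMap_eq_smul_one, hK, hN] using h4
  have hcomm : K * N = N * K := by
    rw [hK, hN]
    simp only [Matrix.sub_mul, Matrix.mul_sub, Matrix.smul_mul, Matrix.mul_smul,
      one_mul, mul_one, smul_smul, smul_sub]
    rw [mul_comm r z₂]
    abel
  have hKKN : (K * K) * N = 0 := by
    calc (K * K) * N = K * (K * N) := by rw [mul_assoc]
      _ = K * (N * K) := by rw [hcomm]
      _ = 0 := hCH
  -- commutation of N and K to move N to the right: (K*K)*N = K*(K*N)=K*(N*K)=(K*N)*K=(N*K)*K = N*K*K... we need (K*K*N) form applied to w as K (K (N w)): (K*K*N) w = K (K (N w))? No: (K*K*N).mulVec w = (K*K).mulVec (N.mulVec w). good.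
  -- left Perron eigenvector
  obtain ⟨r', hr'pos, ⟨φ, hφpos, hφ⟩, hdomT⟩ := perron3 (A := Aᵀ) (fun i j => hA j i)
  have htrans : ∀ t : ℝ, (t • (1 : Matrix (Fin 3) (Fin 3) ℝ) - Aᵀ) =
      (t • (1 : Matrix (Fin 3) (Fin 3) ℝ) - A)ᵀ := by
    intro t
    rw [Matrix.transpose_sub, Matrix.transpose_smul, Matrix.transpose_one]
  have hrr' : r' = r := by
    have hφne : φ ≠ 0 := fun h => (hφpos 0).ne' (by rw [h]; rfl)
    have h5 : (r' • (1 : Matrix (Fin 3) (Fin 3) ℝ) - A).det = 0 := by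
      have := eig_to_root Aᵀ r' φ hφne hφ
      rwa [htrans, Matrix.det_transpose] at this
    obtain ⟨w, hw0, hw⟩ := root_to_eig A r' h5
    have h6 : r' ≤ r := by
      have := hdom r' w hw0 hw
      rwa [abs_of_pos hr'pos] at this
    have h7 : (r • (1 : Matrix (Fin 3) (Fin 3) ℝ) - Aᵀ).det = 0 := by
      rw [htrans, Matrix.det_transpose]
      exact eig_to_root A r v hvne hAv
    obtain ⟨w', hw'0, hw'⟩ := root_to_eig Aᵀ r h7
    have h8 : r ≤ r' := by
      have := hdomT r w' hw'0 hw'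
      rwa [abs_of_pos hrpos] at this
    linarith
  rw [hrr'] at hφ
  -- φ annihilates the range of K
  have hφK : ∀ z : Fin 3 → ℝ, φ ⬝ᵥ (K.mulVec z) = 0 := by
    intro z
    rw [Matrix.dotProduct_mulVec]
    have h9 : φ ᵥ* K = 0 := by
      rw [hK, Matrix.vecMul_sub, ← Matrix.mulVec_transpose, hφ]
      funext i
      simp [Matrix.vecMul, dotProduct, Matrix.one_apply, mul_comm]
    rw [h9, zero_dotProduct]
  -- kernel of K is spanned by v
  have hker : ∀ z : Fin 3 → ℝ, K.mulVec z = 0 → ∃ t : ℝ, z = t • v := by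
    intro z hz
    apply eigen_unique3 hA hrpos hvpos hAv
    rw [hK, Matrix.sub_mulVec, Matrix.smul_mulVec, Matrix.one_mulVec] at hz
    have := sub_eq_zero.mp hz
    rw [this]
  -- range of N is contained in ℝ v
  have hcols : ∀ wv : Fin 3 → ℝ, ∃ t : ℝ, N.mulVec wv = t • v := by
    intro wv
    set y := N.mulVec wv with hy
    have hKKy : K.mulVec (K.mulVec y) = 0 := by
      rw [hy, Matrix.mulVec_mulVec, Matrix.mulVec_mulVec, hKKN, Matrix.zero_mulVec]
    obtain ⟨t', ht'⟩ := hker _ hKKy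
    have ht'0 : t' = 0 := by
      have h10 := hφK y
      rw [ht'] at h10
      rw [dotProduct_smul] at h10
      have hφv : 0 < φ ⬝ᵥ v := by
        rw [dotProduct]
        exact Finset.sum_pos (fun i _ => mul_pos (hφpos i) (hvpos i)) ⟨0, Finset.mem_univ 0⟩
      rcases mul_eq_zero.mp h10 with h | h
      · exact h
      · exact absurd h hφv.ne'
    rw [ht'0, zero_smul] at ht'
    exact hker y ht'
  -- extract column coefficients
  have hcol : ∀ j : Fin 3, ∃ t : ℝ, ∀ i, N i j = t * v i := by
    intro j
    obtain ⟨t, ht⟩ := hcols (Pi.single j 1)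
    refine ⟨t, fun i => ?_⟩
    have := congrFun ht i
    rw [Matrix.mulVec_single] at this
    simpa using this
  choose tc htc using hcol
  -- N v = (r - z₂) • v
  have hNv : N.mulVec v = (r - z₂) • v := by
    rw [hN, Matrix.sub_mulVec, Matrix.smul_mulVec, Matrix.one_mulVec, hAv, sub_smul]
  -- sum of tc j * v j = r - z₂
  have hsum : ∑ j, tc j * v j = r - z₂ := by
    have h11 : N.mulVec v 0 = (∑ j, tc j * v j) * v 0 := by
      rw [Matrix.mulVec, dotProduct]
      rw [Finset.sum_mul]
      congr 1
      funext j
      rw [htc j 0]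
      ring
    rw [hNv] at h11
    simp only [Pi.smul_apply, smul_eq_mul] at h11
    have := (hvpos 0).ne'
    field_simp at h11
    linarith [h11]
  -- trace of N
  have htrN : N.trace = ∑ j, tc j * v j := by
    rw [Matrix.trace]
    congr 1
    funext j
    rw [Matrix.diag_apply, htc j j]
  have htrN' : N.trace = A.trace - 3 * z₂ := by
    rw [hN, Matrix.trace_sub, Matrix.trace_smul, Matrix.trace_one]
    simp
    ring
  rw [hsum] at htrN
  rw [htr] at htrN'
  rw [htrN] at htrN'
  -- r - z₂ = 2(r - z₂) forces r = z₂, contradiction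
  have : r = z₂ := by linarith
  linarith

def LTy (B : Matrix (Fin 3) (Fin 3) ℝ) : Prop :=
  ∃ p q : ℝ, 0 < p ∧ p < 1 ∧ 0 < q ∧ B = !![1,0,1;p,0,1;0,q,0]

def HH (B : Matrix (Fin 3) (Fin 3) ℝ) : Prop :=
  (∀ i j, 0 ≤ B i j) ∧ (∀ i, 0 < B i 2) ∧ (∀ i, 0 < B i 0 + B i 1)

lemma posL' {B : Matrix (Fin 3) (Fin 3) ℝ} (hB : HH B) {p q : ℝ} (hp : 0 < p) (hp1 : p < 1)
    (hq : 0 < q) :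
    ∀ i j, 0 < (B * !![1,0,1;p,0,1;0,q,0]) i j := by
  obtain ⟨h0, h2, h01⟩ := hB
  intro i j
  rw [Matrix.mul_apply, Fin.sum_univ_three]
  fin_cases j <;>
    simp [Matrix.cons_val_zero, Matrix.cons_val_one] <;>
    nlinarith [h0 i 0, h0 i 1, h0 i 2, h2 i, h01 i, mul_pos hp (h01 i),
      mul_nonneg (h0 i 0) (sub_nonneg.mpr hp1.le), mul_pos (h2 i) hq]

lemma pos_HH {B : Matrix (Fin 3) (Fin 3) ℝ} (h : ∀ i j, 0 < B i j) : HH B :=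
  ⟨fun i j => (h i j).le, fun i => h i 2, fun i => by linarith [h i 0, h i 1]⟩

lemma prodH : ∀ (l : List (Matrix (Fin 3) (Fin 3) ℝ)), (∀ B ∈ l, LTy B) →
    ∀ P : Matrix (Fin 3) (Fin 3) ℝ, HH P → l ≠ [] → ∀ i j, 0 < (P * l.prod) i j := by
  intro l
  induction l with
  | nil => intro _ _ _ h; exact absurd rfl h
  | cons B t ih =>
    intro hlt P hP _
    obtain ⟨p, q, hp, hp1, hq, rfl⟩ := hlt B (List.mem_cons_self)
    have hPB : ∀ i j, 0 < (P * !![1,0,1;p,0,1;0,q,0]) i j := posL' hP hp hp1 hq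
    by_cases ht : t = []
    · subst ht
      simpa [Matrix.mul_assoc] using fun i j => hPB i j
    · intro i j
      have := ih (fun B hB => hlt B (List.mem_cons_of_mem _ hB)) _ (pos_HH hPB) ht i j
      rwa [List.prod_cons, ← Matrix.mul_assoc]

lemma mul2 (p₁ q₁ p₂ q₂ : ℝ) :
    (!![1,0,1;p₁,0,1;0,q₁,0] * !![1,0,1;p₂,0,1;0,q₂,0] : Matrix (Fin 3) (Fin 3) ℝ) =
      !![1, q₂, 1; p₁, q₂, p₁; q₁ * p₂, 0, q₁] := by
  ext i j
  fin_cases i <;> fin_cases j <;>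
    simp [Matrix.mul_apply, Fin.sum_univ_three]

lemma detL {p q : ℝ} : (!![1,0,1;p,0,1;0,q,0] : Matrix (Fin 3) (Fin 3) ℝ).det = q * (p - 1) := by
  simp [Matrix.det_fin_three]
  ring

lemma neg_list_prod : ∀ (l : List ℝ), (∀ x ∈ l, x < 0) →
    (Odd l.length → l.prod < 0) ∧ (Even l.length → 0 < l.prod) := by
  intro l
  induction l with
  | nil => exact fun _ => ⟨fun h => absurd h (by simp), fun _ => by simp⟩
  | cons a t ih =>
    intro hneg
    have ha : a < 0 := hneg a (List.mem_cons_self)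
    have iht := ih (fun x hx => hneg x (List.mem_cons_of_mem _ hx))
    constructor
    · intro hodd
      have : Even t.length := by
        rcases Nat.even_or_odd t.length with h | h
        · exact h
        · exfalso; rw [List.length_cons] at hodd
          rcases hodd with ⟨k, hk⟩
          rcases h with ⟨m, hm⟩
          omega
      have := iht.2 this
      rw [List.prod_cons]
      exact mul_neg_of_neg_of_pos ha this
    · intro heven
      have : Odd t.length := by
        rcases Nat.even_or_odd t.length with h | h
        · exfalso; rw [List.length_cons] at heven
          rcases heven with ⟨k, hk⟩
          rcases h with ⟨m, hm⟩
          omega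
        · exact h
      have := iht.1 this
      rw [List.prod_cons]
      exact mul_pos_of_neg_of_neg ha this

/-- If `x̂_k < 0`, `ŷ_k < 0` and `x̂_k ŷ_k < 1` (n-periodic, n ≥ 3 odd), then the product
`M = L₁ ⋯ L_n` of the matrices `L_k = [[1,0,1],[1 - x̂_kŷ_k,0,1],[0,-ŷ_k,0]]` has three
distinct real eigenvalues. -/
theorem monodromy_three_distinct_real_eigenvalues (n : ℕ) (hn : 3 ≤ n) (hodd : Odd n)
    (x y : ℤ → ℝ)
    (hpx : ∀ k, x (k + n) = x k) (hpy : ∀ k, y (k + n) = y k)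
    (hx : ∀ k, x k < 0) (hy : ∀ k, y k < 0) (hxy : ∀ k, x k * y k < 1) :
    ∃ z₁ z₂ z₃ : ℝ, z₁ ≠ z₂ ∧ z₁ ≠ z₃ ∧ z₂ ≠ z₃ ∧
      Matrix.charpoly
        (((List.range n).map (fun k : ℕ =>
          !![(1 : ℝ), 0, 1;
             1 - x ((k : ℤ) + 1) * y ((k : ℤ) + 1), 0, 1;
             0, -(y ((k : ℤ) + 1)), 0])).prod) =
        (X - C z₁) * (X - C z₂) * (X - C z₃) := by
  classical
  set f : ℕ → Matrix (Fin 3) (Fin 3) ℝ := fun k : ℕ =>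
    !![(1 : ℝ), 0, 1;
       1 - x ((k : ℤ) + 1) * y ((k : ℤ) + 1), 0, 1;
       0, -(y ((k : ℤ) + 1)), 0] with hf
  have hLTy : ∀ k : ℕ, LTy (f k) := by
    intro k
    refine ⟨1 - x ((k : ℤ) + 1) * y ((k : ℤ) + 1), -(y ((k : ℤ) + 1)), ?_, ?_, ?_, rfl⟩
    · linarith [hxy ((k : ℤ) + 1)]
    · have := mul_pos_of_neg_of_neg (hx ((k : ℤ) + 1)) (hy ((k : ℤ) + 1))
      linarith
    · linarith [hy ((k : ℤ) + 1)]
  set M := ((List.range n).map f).prod with hM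
  -- positivity of M
  obtain ⟨m, hm, hm1⟩ : ∃ m, n = 2 + m ∧ 1 ≤ m := ⟨n - 2, by omega, by omega⟩
  have hsplit : (List.range n).map f = [f 0, f 1] ++ ((List.range m).map fun k => f (2 + k)) := by
    rw [hm, List.range_add, List.map_append, List.map_map]
    rfl
  have hMpos : ∀ i j, 0 < M i j := by
    have hP : HH (f 0 * f 1) := by
      obtain ⟨p₁, q₁, hp₁, hp₁1, hq₁, he₁⟩ := hLTy 0
      obtain ⟨p₂, q₂, hp₂, hp₂1, hq₂, he₂⟩ := hLTy 1
      rw [he₁, he₂, mul2]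
      refine ⟨?_, ?_, ?_⟩
      · intro i j
        fin_cases i <;> fin_cases j <;> simp
        all_goals nlinarith [hp₁.le, hq₁.le, hp₂.le, hq₂.le, mul_nonneg hq₁.le hp₂.le]
      · intro i
        fin_cases i <;> simp
        all_goals nlinarith [hp₁, hq₁]
      · intro i
        fin_cases i <;> simp
        all_goals nlinarith [hp₁, hq₁, hp₂, hq₂, mul_pos hq₁ hp₂]
    have hne : ((List.range m).map fun k => f (2 + k)) ≠ [] := by
      intro h
      have := congrArg List.length h
      simp at this
      omega
    have hall : ∀ B ∈ (List.range m).map fun k => f (2 + k), LTy B := by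
      intro B hB
      obtain ⟨k, _, rfl⟩ := List.mem_map.mp hB
      exact hLTy (2 + k)
    have h1 := prodH _ hall (f 0 * f 1) hP hne
    intro i j
    have h2 := h1 i j
    rw [hM, hsplit, List.prod_append]
    simpa [Matrix.mul_assoc] using h2
  -- determinant of M is negative
  have hMdet : M.det < 0 := by
    have h3 : M.det = (((List.range n).map f).map Matrix.det).prod := by
      rw [hM, ← Matrix.coe_detMonoidHom]
      exact map_list_prod (Matrix.detMonoidHom) _
    have h4 : ∀ z ∈ ((List.range n).map f).map Matrix.det, z < 0 := by
      intro z hz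
      obtain ⟨B, hB, rfl⟩ := List.mem_map.mp hz
      obtain ⟨k, _, rfl⟩ := List.mem_map.mp hB
      obtain ⟨p, q, hp, hp1, hq, he⟩ := hLTy k
      rw [he, detL]
      nlinarith
    have h5 : Odd (((List.range n).map f).map Matrix.det).length := by
      simpa using hodd
    rw [h3]
    exact (neg_list_prod _ h4).1 h5
  obtain ⟨z₁, z₂, z₃, h12, h13, h23, hcp⟩ := main3 hMpos hMdet
  exact ⟨z₁, z₂, z₃, h12, h13, h23, by rw [hcp, ← mul_assoc]⟩
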